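/- Let k be a field of characteristic zero and N ≥ 1, and let Q(N) be the queer matrix superalgebra with odd invariant scalar product g(X,Y) = otr(X·Y). Let (e_μ), (e^μ) be homogeneous dual bases of Q(N) with g(e^μ, e_ν) = δ^μ_ν. Then for every even element a ∈ Q(N): Σ_μ (−1)^{|e^μ|} e^μ·a·e_μ = 0. (This cancellation — the terms coming from the even basis vector E^i_j and the odd basis vector ΠE^i_j cancel pairwise — is the reason why only stable ribbon graphs all of whose cyclically ordered subsets of flags have odd cardinality contribute to the partition function of Q(N).) -/

import Mathlib

open Matrix

/-- `2N×2N` matrices over `k`, written in `N×N` block form. -/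
abbrev MM (k : Type*) (N : ℕ) := Matrix (Fin N ⊕ Fin N) (Fin N ⊕ Fin N) k

variable (k : Type*) [Field k] (N : ℕ)

/-- The block matrix `J = [[0, 1],[1, 0]]`. -/
noncomputable def Jmat : MM k N := Matrix.fromBlocks 0 1 1 0

/-- The queer matrix superalgebra `Q(N)`: matrices commuting with `J`, i.e. block
matrices `[[A,B],[B,A]]`. -/
noncomputable def QN : Submodule k (MM k N) :=
  LinearMap.ker (LinearMap.mulRight k (Jmat k N) - LinearMap.mulLeft k (Jmat k N))

/-- The upper-left block, as a linear map. -/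
def blk11 : MM k N →ₗ[k] Matrix (Fin N) (Fin N) k where
  toFun X := X.toBlocks₁₁
  map_add' _ _ := rfl
  map_smul' _ _ := rfl

/-- The upper-right block, as a linear map. -/
def blk12 : MM k N →ₗ[k] Matrix (Fin N) (Fin N) k where
  toFun X := X.toBlocks₁₂
  map_add' _ _ := rfl
  map_smul' _ _ := rfl

/-- The lower-left block, as a linear map. -/
def blk21 : MM k N →ₗ[k] Matrix (Fin N) (Fin N) k where
  toFun X := X.toBlocks₂₁
  map_add' _ _ := rfl
  map_smul' _ _ := rfl

/-- The lower-right block, as a linear map. -/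
def blk22 : MM k N →ₗ[k] Matrix (Fin N) (Fin N) k where
  toFun X := X.toBlocks₂₂
  map_add' _ _ := rfl
  map_smul' _ _ := rfl

/-- The even part of `Q(N)`: block matrices `[[A,0],[0,A]]`. -/
noncomputable def QN0 : Submodule k (MM k N) :=
  QN k N ⊓ LinearMap.ker (blk12 k N) ⊓ LinearMap.ker (blk21 k N)

/-- The odd part of `Q(N)`: block matrices `[[0,B],[B,0]]`. -/
noncomputable def QN1 : Submodule k (MM k N) :=
  QN k N ⊓ LinearMap.ker (blk11 k N) ⊓ LinearMap.ker (blk22 k N)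

/-- The odd trace: `otr([[A,B],[B,A]]) = tr B`. -/
noncomputable def otr : MM k N → k := fun X => Matrix.trace X.toBlocks₁₂

/-- `X` is a homogeneous element of `Q(N)` of parity `p`. -/
noncomputable def QHomog (p : ℕ) (X : MM k N) : Prop :=
  if p % 2 = 0 then X ∈ QN0 k N else X ∈ QN1 k N

section Aux
variable {k : Type*} [Field k] {N : ℕ}

lemma memQN_iff {z : MM k N} : z ∈ QN k N ↔ z * Jmat k N = Jmat k N * z := by
  simp [QN, LinearMap.mem_ker, LinearMap.sub_apply, sub_eq_zero]

lemma memQN_fb {A B C D : Matrix (Fin N) (Fin N) k} :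
    fromBlocks A B C D ∈ QN k N ↔ C = B ∧ D = A := by
  rw [memQN_iff, Jmat, fromBlocks_multiply, fromBlocks_multiply]
  simp only [Matrix.mul_zero, Matrix.mul_one, Matrix.zero_mul, Matrix.one_mul,
    zero_add, add_zero]
  rw [fromBlocks_inj]
  tauto

lemma memQN_of (A B : Matrix (Fin N) (Fin N) k) : fromBlocks A B B A ∈ QN k N :=
  memQN_fb.mpr ⟨rfl, rfl⟩

lemma decompQN {z : MM k N} (hz : z ∈ QN k N) :
    z = fromBlocks z.toBlocks₁₁ z.toBlocks₁₂ z.toBlocks₁₂ z.toBlocks₁₁ := by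
  conv_lhs => rw [← fromBlocks_toBlocks z]
  rw [← fromBlocks_toBlocks z] at hz
  obtain ⟨h1, h2⟩ := memQN_fb.mp hz
  rw [h1, h2]

lemma memQN0_iff {z : MM k N} :
    z ∈ QN0 k N ↔ z ∈ QN k N ∧ z.toBlocks₁₂ = 0 ∧ z.toBlocks₂₁ = 0 := by
  show z ∈ QN k N ⊓ LinearMap.ker (blk12 k N) ⊓ LinearMap.ker (blk21 k N) ↔ _
  simp only [Submodule.mem_inf, LinearMap.mem_ker, and_assoc]
  exact Iff.rfl

lemma memQN1_iff {z : MM k N} :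
    z ∈ QN1 k N ↔ z ∈ QN k N ∧ z.toBlocks₁₁ = 0 ∧ z.toBlocks₂₂ = 0 := by
  show z ∈ QN k N ⊓ LinearMap.ker (blk11 k N) ⊓ LinearMap.ker (blk22 k N) ↔ _
  simp only [Submodule.mem_inf, LinearMap.mem_ker, and_assoc]
  exact Iff.rfl

lemma decompQN0 {z : MM k N} (hz : z ∈ QN0 k N) :
    z = fromBlocks z.toBlocks₁₁ 0 0 z.toBlocks₁₁ := by
  obtain ⟨h1, h2, _⟩ := memQN0_iff.mp hz
  conv_lhs => rw [decompQN h1]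
  rw [h2]

lemma decompQN1 {z : MM k N} (hz : z ∈ QN1 k N) :
    z = fromBlocks 0 z.toBlocks₁₂ z.toBlocks₁₂ 0 := by
  obtain ⟨h1, h2, _⟩ := memQN1_iff.mp hz
  conv_lhs => rw [decompQN h1]
  rw [h2]

lemma memQN0_of (A : Matrix (Fin N) (Fin N) k) : fromBlocks A 0 0 A ∈ QN0 k N :=
  memQN0_iff.mpr ⟨memQN_of A 0, rfl, rfl⟩

lemma memQN1_of (B : Matrix (Fin N) (Fin N) k) : fromBlocks 0 B B 0 ∈ QN1 k N :=
  memQN1_iff.mpr ⟨memQN_of 0 B, rfl, rfl⟩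

lemma otr_fb (A B C D : Matrix (Fin N) (Fin N) k) :
    otr k N (fromBlocks A B C D) = Matrix.trace B := by
  simp [otr]

lemma otr_even_even {x y : MM k N} (hx : x ∈ QN0 k N) (hy : y ∈ QN0 k N) :
    otr k N (x * y) = 0 := by
  rw [decompQN0 hx, decompQN0 hy, fromBlocks_multiply]
  simp [otr_fb]

lemma otr_odd_odd {x y : MM k N} (hx : x ∈ QN1 k N) (hy : y ∈ QN1 k N) :
    otr k N (x * y) = 0 := by
  rw [decompQN1 hx, decompQN1 hy, fromBlocks_multiply]
  simp [otr_fb]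

lemma otr_comm {x y : MM k N} (hx : x ∈ QN k N) (hy : y ∈ QN k N) :
    otr k N (x * y) = otr k N (y * x) := by
  rw [decompQN hx, decompQN hy, fromBlocks_multiply, fromBlocks_multiply,
    otr_fb, otr_fb, Matrix.trace_add, Matrix.trace_add,
    Matrix.trace_mul_comm, add_comm, Matrix.trace_mul_comm]

end Aux

section Aux2
variable {k : Type*} [Field k] {N : ℕ}

/-- The odd trace as a linear map. -/
noncomputable def otrL : MM k N →ₗ[k] k :=
  (Matrix.traceLinearMap (Fin N) k k).comp (blk12 k N)

lemma otr_eq (z : MM k N) : otr k N z = otrL z := rfl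

/-- trace of `E_{ji} * A` is `A i j`. -/
lemma trace_stdMul (i j : Fin N) (A : Matrix (Fin N) (Fin N) k) :
    Matrix.trace (Matrix.single j i (1 : k) * A) = A i j := by
  classical
  rw [Matrix.trace, Finset.sum_eq_single j]
  · simp
  · intro b _ hb
    simpa [Matrix.diag] using Matrix.single_mul_apply_of_ne (c := (1 : k)) j i b b hb A
  · intro hj
    exact absurd (Finset.mem_univ j) hj

/-- The Riesz representative of the `(t,s)` entry functional. -/
noncomputable def Wmat (t s : Fin N ⊕ Fin N) : MM k N :=
  match t, s with
  | Sum.inl i, Sum.inl j => fromBlocks 0 (Matrix.single j i 1) (Matrix.single j i 1) 0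
  | Sum.inl i, Sum.inr j => fromBlocks (Matrix.single j i 1) 0 0 (Matrix.single j i 1)
  | Sum.inr i, Sum.inl j => fromBlocks (Matrix.single j i 1) 0 0 (Matrix.single j i 1)
  | Sum.inr i, Sum.inr j => fromBlocks 0 (Matrix.single j i 1) (Matrix.single j i 1) 0

@[simp] lemma Wmat_ll (i j : Fin N) : (Wmat (Sum.inl i) (Sum.inl j) : MM k N)
    = fromBlocks 0 (Matrix.single j i 1) (Matrix.single j i 1) 0 := rfl
@[simp] lemma Wmat_lr (i j : Fin N) : (Wmat (Sum.inl i) (Sum.inr j) : MM k N)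
    = fromBlocks (Matrix.single j i 1) 0 0 (Matrix.single j i 1) := rfl
@[simp] lemma Wmat_rl (i j : Fin N) : (Wmat (Sum.inr i) (Sum.inl j) : MM k N)
    = fromBlocks (Matrix.single j i 1) 0 0 (Matrix.single j i 1) := rfl
@[simp] lemma Wmat_rr (i j : Fin N) : (Wmat (Sum.inr i) (Sum.inr j) : MM k N)
    = fromBlocks 0 (Matrix.single j i 1) (Matrix.single j i 1) 0 := rfl

/-- The parity of `Wmat t s`. -/
def Pp {N : ℕ} (t s : Fin N ⊕ Fin N) : ℕ :=
  match t, s with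
  | Sum.inl _, Sum.inl _ => 1
  | Sum.inl _, Sum.inr _ => 0
  | Sum.inr _, Sum.inl _ => 0
  | Sum.inr _, Sum.inr _ => 1

@[simp] lemma Pp_ll (i j : Fin N) : Pp (Sum.inl i) (Sum.inl j) = 1 := rfl
@[simp] lemma Pp_lr (i j : Fin N) : Pp (Sum.inl i) (Sum.inr j) = 0 := rfl
@[simp] lemma Pp_rl (i j : Fin N) : Pp (Sum.inr i) (Sum.inl j) = 0 := rfl
@[simp] lemma Pp_rr (i j : Fin N) : Pp (Sum.inr i) (Sum.inr j) = 1 := rfl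

lemma Wmat_mem (t s : Fin N ⊕ Fin N) : (Wmat t s : MM k N) ∈ QN k N := by
  rcases t with i | i <;> rcases s with j | j
  · rw [Wmat_ll]; exact memQN_of _ _
  · rw [Wmat_lr]; exact memQN_of _ _
  · rw [Wmat_rl]; exact memQN_of _ _
  · rw [Wmat_rr]; exact memQN_of _ _

lemma Wmat_even {t s : Fin N ⊕ Fin N} (h : Pp t s = 0) : (Wmat t s : MM k N) ∈ QN0 k N := by
  rcases t with i | i <;> rcases s with j | j
  · exact absurd h one_ne_zero
  · rw [Wmat_lr]; exact memQN0_of _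
  · rw [Wmat_rl]; exact memQN0_of _
  · exact absurd h one_ne_zero

lemma Wmat_odd {t s : Fin N ⊕ Fin N} (h : Pp t s = 1) : (Wmat t s : MM k N) ∈ QN1 k N := by
  rcases t with i | i <;> rcases s with j | j
  · rw [Wmat_ll]; exact memQN1_of _
  · exact absurd h zero_ne_one
  · exact absurd h zero_ne_one
  · rw [Wmat_rr]; exact memQN1_of _

lemma Pp_cases (t s : Fin N ⊕ Fin N) : Pp t s = 0 ∨ Pp t s = 1 := by
  rcases t with i | i <;> rcases s with j | j <;> simp

/-- Entry extraction: `z t s = otr (Wmat t s * z)` for `z ∈ QN`. -/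
lemma entry_eq_otr {z : MM k N} (hz : z ∈ QN k N) (t s : Fin N ⊕ Fin N) :
    z t s = otr k N (Wmat t s * z) := by
  have hd := decompQN hz
  rcases t with i | i <;> rcases s with j | j <;>
    · conv_lhs => rw [hd]
      conv_rhs => rw [hd]
      simp [fromBlocks_multiply, otr_fb, trace_stdMul]

end Aux2

section Aux3
variable {k : Type*} [Field k] {N : ℕ}

lemma final_cancel {a : MM k N} (ha : a ∈ QN0 k N) (r s : Fin N ⊕ Fin N) :
    ∑ t, (-1 : k) ^ (Pp t s) * ((Wmat t s * a : MM k N) r t) = 0 := by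
  classical
  have hd := decompQN0 ha
  rw [Fintype.sum_sum_type]
  rcases s with j | j <;> rcases r with ri | ri <;>
    · conv_lhs => rw [hd]
      simp [fromBlocks_multiply]

variable {ι : Type*} [Fintype ι] [DecidableEq ι]

lemma expand_e (e : Module.Basis ι k ↥(QN k N)) (f : ι → ↥(QN k N))
    (hdual : ∀ μ ν, otr k N ((f μ : MM k N) * (e ν : MM k N)) = if μ = ν then 1 else 0)
    (z : ↥(QN k N)) :
    ∑ μ, otr k N ((f μ : MM k N) * (z : MM k N)) • e μ = z := by
  classical
  set φ : ↥(QN k N) →ₗ[k] ↥(QN k N) :=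
    ∑ μ, (otrL.comp ((LinearMap.mulLeft k ((f μ : MM k N))).comp
      (QN k N).subtype)).smulRight (e μ) with hφdef
  have hφ : ∀ w : ↥(QN k N), φ w = ∑ μ, otr k N ((f μ : MM k N) * (w : MM k N)) • e μ := by
    intro w
    rw [hφdef, LinearMap.sum_apply]
    exact Finset.sum_congr rfl fun μ _ => rfl
  have hid : φ = LinearMap.id := by
    refine e.ext fun ν => ?_
    rw [hφ]
    simp [hdual]
  calc ∑ μ, otr k N ((f μ : MM k N) * (z : MM k N)) • e μ = φ z := (hφ z).symm
    _ = z := by rw [hid]; rfl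

lemma nd_e (e : Module.Basis ι k ↥(QN k N)) (f : ι → ↥(QN k N))
    (hdual : ∀ μ ν, otr k N ((f μ : MM k N) * (e ν : MM k N)) = if μ = ν then 1 else 0)
    (z : ↥(QN k N)) (hz : ∀ ν, otr k N ((e ν : MM k N) * (z : MM k N)) = 0) : z = 0 := by
  classical
  have h1 : ∀ μ, otr k N ((f μ : MM k N) * (z : MM k N)) = 0 := by
    intro μ
    set L : ↥(QN k N) →ₗ[k] k :=
      otrL.comp ((LinearMap.mulRight k ((z : MM k N))).comp (QN k N).subtype) with hLdef
    have hL : ∀ x : ↥(QN k N), L x = otr k N ((x : MM k N) * (z : MM k N)) := fun _ => rfl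
    calc otr k N ((f μ : MM k N) * (z : MM k N)) = L (f μ) := (hL _).symm
      _ = L (∑ ν, e.repr (f μ) ν • e ν) := by rw [e.sum_repr (f μ)]
      _ = ∑ ν, e.repr (f μ) ν • L (e ν) := by rw [map_sum]; exact Finset.sum_congr rfl fun ν _ => LinearMap.map_smul L _ _
      _ = 0 := by
          refine Finset.sum_eq_zero fun ν _ => ?_
          rw [hL, hz ν, smul_zero]
  have h2 := expand_e e f hdual z
  rw [← h2]
  exact Finset.sum_eq_zero fun μ _ => by rw [h1, zero_smul]

lemma expand_f (e : Module.Basis ι k ↥(QN k N)) (f : ι → ↥(QN k N))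
    (hdual : ∀ μ ν, otr k N ((f μ : MM k N) * (e ν : MM k N)) = if μ = ν then 1 else 0)
    (w : ↥(QN k N)) :
    ∑ μ, otr k N ((w : MM k N) * (e μ : MM k N)) • f μ = w := by
  classical
  set z : ↥(QN k N) := w - ∑ μ, otr k N ((w : MM k N) * (e μ : MM k N)) • f μ with hzdef
  have hz : ∀ ν, otr k N ((e ν : MM k N) * (z : MM k N)) = 0 := by
    intro ν
    set L : ↥(QN k N) →ₗ[k] k :=
      otrL.comp ((LinearMap.mulLeft k ((e ν : MM k N))).comp (QN k N).subtype) with hLdef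
    have hL : ∀ x : ↥(QN k N), L x = otr k N ((e ν : MM k N) * (x : MM k N)) := fun _ => rfl
    have hsplit : L z = L w - ∑ μ, otr k N ((w : MM k N) * (e μ : MM k N)) • L (f μ) := by
      rw [hzdef, map_sub, map_sum]
      congr 1
      exact Finset.sum_congr rfl fun μ _ => LinearMap.map_smul L _ _
    have hLf : ∀ μ, L (f μ) = if μ = ν then 1 else 0 := by
      intro μ
      rw [hL, otr_comm (e ν).2 (f μ).2]
      exact hdual μ ν
    have hLw : L w = otr k N ((w : MM k N) * (e ν : MM k N)) := by
      rw [hL, otr_comm (e ν).2 w.2]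
    rw [← hL, hsplit, hLw]
    simp [hLf]
  have hz0 : z = 0 := nd_e e f hdual z hz
  have h3 : w - ∑ μ, otr k N ((w : MM k N) * (e μ : MM k N)) • f μ = 0 := hzdef ▸ hz0
  exact (sub_eq_zero.mp h3).symm

lemma expand_f_coe (e : Module.Basis ι k ↥(QN k N)) (f : ι → ↥(QN k N))
    (hdual : ∀ μ ν, otr k N ((f μ : MM k N) * (e ν : MM k N)) = if μ = ν then 1 else 0)
    {w : MM k N} (hw : w ∈ QN k N) :
    ∑ μ, otr k N (w * (e μ : MM k N)) • (f μ : MM k N) = w := by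
  have h := congrArg (Subtype.val) (expand_f e f hdual ⟨w, hw⟩)
  simpa using h

end Aux3

section MainAux
variable {k : Type*} [Field k] {N : ℕ}

lemma homog_even {p : ℕ} {X : MM k N} (h : QHomog k N p X) (hp : p % 2 = 0) :
    X ∈ QN0 k N := by
  unfold QHomog at h; rwa [if_pos hp] at h

lemma homog_odd {p : ℕ} {X : MM k N} (h : QHomog k N p X) (hp : ¬ p % 2 = 0) :
    X ∈ QN1 k N := by
  unfold QHomog at h; rwa [if_neg hp] at h

end MainAux


/-- For homogeneous dual bases `(e_μ)`, `(e^μ)` of `Q(N)` with respect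
to `g(X,Y) = otr(XY)`, and every even element `a` of `Q(N)`:
`Σ_μ (−1)^{|e^μ|} e^μ·a·e_μ = 0`. -/
theorem queer_algebra_even_insertion_vanishes
    (k : Type*) [Field k] [CharZero k] (N : ℕ) (hN : 1 ≤ N)
    {ι : Type*} [Fintype ι] [DecidableEq ι]
    (e : Module.Basis ι k ↥(QN k N)) (f : ι → ↥(QN k N)) (q : ι → ℕ)
    (hf : ∀ μ, QHomog k N (q μ) (f μ : MM k N))
    (he : ∀ μ, QHomog k N (q μ + 1) (e μ : MM k N))
    (hdual : ∀ μ ν, otr k N ((f μ : MM k N) * (e ν : MM k N)) =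
      if μ = ν then 1 else 0)
    (a : MM k N) (ha : a ∈ QN0 k N) :
    ∑ μ, (-1 : k) ^ (q μ) • ((f μ : MM k N) * a * (e μ : MM k N)) = 0 := by
  classical
  have key : ∀ (μ : ι) (t s : Fin N ⊕ Fin N),
      (-1 : k) ^ (q μ) * otr k N (Wmat t s * (e μ : MM k N))
        = (-1 : k) ^ (Pp t s) * otr k N (Wmat t s * (e μ : MM k N)) := by
    intro μ t s
    by_cases h : otr k N (Wmat t s * (e μ : MM k N)) = 0
    · rw [h, mul_zero, mul_zero]
    have hp := he μ
    rcases Nat.even_or_odd (q μ) with hq | hq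
    · rcases Pp_cases t s with hP | hP
      · rw [hP, hq.neg_one_pow, pow_zero]
      · exfalso; apply h
        have h1 : (e μ : MM k N) ∈ QN1 k N := by
          refine homog_odd hp ?_
          have := Nat.even_iff.mp hq; omega
        exact otr_odd_odd (Wmat_odd hP) h1
    · rcases Pp_cases t s with hP | hP
      · exfalso; apply h
        have h1 : (e μ : MM k N) ∈ QN0 k N := by
          refine homog_even hp ?_
          have := Nat.odd_iff.mp hq; omega
        exact otr_even_even (Wmat_even hP) h1
      · rw [hP, hq.neg_one_pow, pow_one]
  ext r s
  rw [Matrix.zero_apply, Matrix.sum_apply]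
  have step1 : ∀ μ, ((f μ : MM k N) * a * (e μ : MM k N)) r s
      = ∑ t, ((f μ : MM k N) * a) r t * otr k N (Wmat t s * (e μ : MM k N)) := by
    intro μ
    rw [Matrix.mul_apply]
    exact Finset.sum_congr rfl fun t _ => by rw [← entry_eq_otr (e μ).2 t s]
  calc ∑ μ, ((-1 : k) ^ (q μ) • ((f μ : MM k N) * a * (e μ : MM k N))) r s
      = ∑ μ, ∑ t, (-1 : k) ^ (q μ)
          * (((f μ : MM k N) * a) r t * otr k N (Wmat t s * (e μ : MM k N))) := by
        refine Finset.sum_congr rfl fun μ _ => ?_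
        rw [Matrix.smul_apply, smul_eq_mul, step1, Finset.mul_sum]
    _ = ∑ t, ∑ μ, (-1 : k) ^ (Pp t s)
          * (otr k N (Wmat t s * (e μ : MM k N)) * (((f μ : MM k N) * a) r t)) := by
        rw [Finset.sum_comm]
        refine Finset.sum_congr rfl fun t _ => Finset.sum_congr rfl fun μ _ => ?_
        have hk := key μ t s
        calc (-1 : k) ^ (q μ)
              * (((f μ : MM k N) * a) r t * otr k N (Wmat t s * (e μ : MM k N)))
            = ((-1 : k) ^ (q μ) * otr k N (Wmat t s * (e μ : MM k N)))
              * (((f μ : MM k N) * a) r t) := by ring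
          _ = ((-1 : k) ^ (Pp t s) * otr k N (Wmat t s * (e μ : MM k N)))
              * (((f μ : MM k N) * a) r t) := by rw [hk]
          _ = (-1 : k) ^ (Pp t s)
              * (otr k N (Wmat t s * (e μ : MM k N)) * (((f μ : MM k N) * a) r t)) := by ring
    _ = ∑ t, (-1 : k) ^ (Pp t s) * ((Wmat t s * a : MM k N) r t) := by
        refine Finset.sum_congr rfl fun t _ => ?_
        rw [← Finset.mul_sum]
        congr 1
        have hW := expand_f_coe e f hdual (Wmat_mem (k := k) t s)
        calc ∑ μ, otr k N (Wmat t s * (e μ : MM k N)) * (((f μ : MM k N) * a) r t)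
            = (((∑ μ, otr k N (Wmat t s * (e μ : MM k N)) • ((f μ : MM k N))) * a)
                : MM k N) r t := by
              rw [Finset.sum_mul, Matrix.sum_apply]
              refine Finset.sum_congr rfl fun μ _ => ?_
              rw [Matrix.smul_mul, Matrix.smul_apply, smul_eq_mul]
          _ = (Wmat t s * a : MM k N) r t := by rw [hW]
    _ = 0 := final_cancel ha r s
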